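/- arXiv:1406.1085 — 5 statements merged into one kernel-verified Lean document; each statement's English description precedes it below -/
import Mathlib

section
/- Let H be a k-uniform hypergraph obtained from K_n^k by deleting a set F of r distinct edges. Then the number of simplices of H is at most C(n, k+1) − Σ_{i=0}^{r−1} max(n − k − i, 0). Equivalently, deleting r edges from K_n^k destroys at least Σ_{i=0}^{r−1} (n − k − i) simplices (when n − k ≥ r). -/
/-- Edge set of the complete k-uniform hypergraph on `Fin n`. -/
def completeEdges (n k : ℕ) : Finset (Finset (Fin n)) :=
  Finset.univ.filter (fun e => e.card = k)

/-- The simplices of a k-uniform hypergraph with edge set `E`. -/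
def simplices (n k : ℕ) (E : Finset (Finset (Fin n))) : Finset (Finset (Fin n)) :=
  Finset.univ.filter (fun S => S.card = k + 1 ∧ ∀ f ∈ Finset.powersetCard k S, f ∈ E)

open Finset

lemma ext_card (n k : ℕ) (f : Finset (Fin n)) (hf : f.card = k) :
    (((univ : Finset (Fin n)).powersetCard (k+1)).filter (fun S => f ⊆ S)).card = n - k := by
  have himg : ((univ : Finset (Fin n)).powersetCard (k+1)).filter (fun S => f ⊆ S)
      = (univ \ f).image (fun v => insert v f) := by
    ext S
    simp only [mem_filter, mem_powersetCard, mem_image, mem_sdiff, mem_univ, true_and,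
      subset_univ]
    constructor
    · rintro ⟨hcard, hsub⟩
      have h1 : (S \ f).card = 1 := by
        rw [card_sdiff_of_subset hsub, hcard, hf]; simp

      obtain ⟨v, hv⟩ := card_eq_one.mp h1
      have hvS : v ∈ S \ f := hv ▸ mem_singleton_self v
      refine ⟨v, (mem_sdiff.mp hvS).2, ?_⟩
      apply Finset.Subset.antisymm
      · intro x hx
        rcases mem_insert.mp hx with h | h
        · exact h ▸ (mem_sdiff.mp hvS).1
        · exact hsub h
      · intro x hx
        by_cases hxf : x ∈ f
        · exact mem_insert_of_mem hxf
        · have : x ∈ S \ f := mem_sdiff.mpr ⟨hx, hxf⟩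
          rw [hv, mem_singleton] at this
          simp [this]
    · rintro ⟨v, hv, rfl⟩
      exact ⟨by rw [card_insert_of_notMem hv, hf], subset_insert _ _⟩
  rw [himg, card_image_of_injOn, card_sdiff_of_subset (subset_univ f), card_univ, Fintype.card_fin, hf]
  intro a ha b hb hab
  simp only [coe_sdiff, coe_univ, Set.mem_diff, Set.mem_univ, true_and, mem_coe] at ha hb
  have hab' : insert a f = insert b f := hab
  have : a ∈ insert b f := by rw [← hab']; exact mem_insert_self a f
  rcases mem_insert.mp this with h | h
  · exact h
  · exact absurd h ha

lemma destroyed_lb (n k : ℕ) (F : Finset (Finset (Fin n))) (hF : ∀ f ∈ F, f.card = k) :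
    ∑ i ∈ Finset.range F.card, (n - k - i)
      ≤ (((univ : Finset (Fin n)).powersetCard (k+1)).filter
          (fun S => ∃ f ∈ F, f ⊆ S)).card := by
  induction F using Finset.induction_on with
  | empty => simp
  | @insert f F' hfF' ih =>
    have hfk : f.card = k := hF f (mem_insert_self _ _)
    have hF' : ∀ g ∈ F', g.card = k := fun g hg => hF g (mem_insert_of_mem hg)
    set A := ((univ : Finset (Fin n)).powersetCard (k+1)) with hA
    set D := A.filter (fun S => ∃ g ∈ F', g ⊆ S) with hD
    set N := A.filter (fun S => f ⊆ S) with hN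
    have hsplit : A.filter (fun S => ∃ g ∈ insert f F', g ⊆ S) = D ∪ N := by
      ext S
      simp only [hD, hN, mem_filter, mem_union, mem_insert]
      constructor
      · rintro ⟨hS, g, hg | hg, hgs⟩
        · exact Or.inr ⟨hS, hg ▸ hgs⟩
        · exact Or.inl ⟨hS, g, hg, hgs⟩
      · rintro (⟨hS, g, hg, hgs⟩ | ⟨hS, hgs⟩)
        · exact ⟨hS, g, Or.inr hg, hgs⟩
        · exact ⟨hS, f, Or.inl rfl, hgs⟩
    rw [card_insert_of_notMem hfF', hsplit, Finset.sum_range_succ]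
    have h1 : (D ∪ N).card = D.card + (N \ D).card := by
      rw [← card_union_of_disjoint disjoint_sdiff, union_sdiff_self_eq_union]
    have h2 : (N \ D).card = N.card - (N ∩ D).card := by
      rw [← sdiff_inter_self_left N D, card_sdiff_of_subset (inter_subset_left)]
    have hNcard : N.card = n - k := ext_card n k f hfk
    have hND : (N ∩ D).card ≤ F'.card := by
      have hsub : N ∩ D ⊆ F'.image (fun g => f ∪ g) := by
        intro S hS
        simp only [mem_inter, hN, hD, mem_filter, hA, mem_powersetCard] at hS
        obtain ⟨⟨⟨-, hScard⟩, hfS⟩, -, g, hg, hgS⟩ := hS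
        have hgne : g ≠ f := fun h => hfF' (h ▸ hg)
        have hun : f ∪ g ⊆ S := union_subset hfS hgS
        have hlt : k + 1 ≤ (f ∪ g).card := by
          by_contra h
          push_neg at h
          have hfeq : f = f ∪ g := Finset.eq_of_subset_of_card_le subset_union_left (by omega)
          have hgf : g ⊆ f := hfeq ▸ subset_union_right
          exact hgne (Finset.eq_of_subset_of_card_le hgf (by rw [hfk, hF' g hg]))
        have hcle := card_le_card hun
        have : f ∪ g = S := Finset.eq_of_subset_of_card_le hun (by omega)
        exact mem_image.mpr ⟨g, hg, this⟩
      exact (card_le_card hsub).trans card_image_le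
    have hterm : n - k - F'.card ≤ N.card - (N ∩ D).card := by
      rw [hNcard]; exact Nat.sub_le_sub_left hND (n - k)
    rw [← h2] at hterm
    rw [h1]
    exact Nat.add_le_add (ih hF') hterm

theorem stmt5 (n k r : ℕ) (F : Finset (Finset (Fin n))) (hF : F ⊆ completeEdges n k)
    (hr : F.card = r) :
    (simplices n k (completeEdges n k \ F)).card ≤
      n.choose (k + 1) - ∑ i ∈ Finset.range r, (n - k - i) := by
  subst hr
  have hFk : ∀ f ∈ F, f.card = k := by
    intro f hf
    have := hF hf
    simpa [completeEdges] using this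
  set A := ((univ : Finset (Fin n)).powersetCard (k+1)) with hA
  set D := A.filter (fun S => ∃ f ∈ F, f ⊆ S) with hD
  have hsub : simplices n k (completeEdges n k \ F) ⊆ A \ D := by
    intro S hS
    simp only [simplices, mem_filter, mem_univ, true_and] at hS
    obtain ⟨hcard, hall⟩ := hS
    have hSA : S ∈ A := by simp [hA, mem_powersetCard, hcard]
    refine mem_sdiff.mpr ⟨hSA, ?_⟩
    simp only [hD, mem_filter]
    rintro ⟨-, f, hfF, hfS⟩
    have : f ∈ Finset.powersetCard k S := mem_powersetCard.mpr ⟨hfS, hFk f hfF⟩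
    have := hall f this
    simp only [completeEdges, mem_sdiff] at this
    exact this.2 hfF
  have hAcard : A.card = n.choose (k+1) := by
    rw [hA, card_powersetCard, card_univ, Fintype.card_fin]
  have hDA : D ⊆ A := filter_subset _ _
  calc (simplices n k (completeEdges n k \ F)).card ≤ (A \ D).card := card_le_card hsub
    _ = A.card - D.card := card_sdiff_of_subset hDA
    _ ≤ n.choose (k+1) - ∑ i ∈ Finset.range F.card, (n - k - i) := by
        have hDlb : ∑ i ∈ Finset.range F.card, (n - k - i) ≤ D.card := by
          rw [hD, hA]; exact destroyed_lb n k F hFk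
        have hDAc : D.card ≤ A.card := card_le_card hDA
        omega
end

section
/- Let F be a set of r edges of K_n^k with n ≥ k + r. The number of simplices of K_n^k destroyed by deleting all edges of F equals Σ_{i=0}^{r−1} (n − k − i) if and only if all edges in F share k−1 common vertices (i.e., there is a (k−1)-set contained in every edge of F). -/
open Finset

lemma aux_simplices_complete (n k : ℕ) :
    simplices n k (completeEdges n k) = univ.filter (fun S => S.card = k + 1) := by
  ext S
  simp only [simplices, completeEdges, mem_filter, mem_univ, true_and, mem_powersetCard,
    and_iff_left_iff_imp]
  exact fun _ f hf => hf.2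

lemma aux_card_supersets {n k : ℕ} (e : Finset (Fin n)) (he : e.card = k) :
    #(univ.filter (fun S : Finset (Fin n) => S.card = k + 1 ∧ e ⊆ S)) = n - k := by
  have himg : univ.filter (fun S : Finset (Fin n) => S.card = k + 1 ∧ e ⊆ S)
      = eᶜ.image (fun u => insert u e) := by
    ext S
    simp only [mem_filter, mem_univ, true_and, mem_image, mem_compl]
    constructor
    · rintro ⟨hc, hsub⟩
      have : (S \ e).Nonempty := by
        rw [← Finset.card_pos, card_sdiff_of_subset hsub, hc, he]; omega
      obtain ⟨u, hu⟩ := this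
      rw [mem_sdiff] at hu
      refine ⟨u, hu.2, ?_⟩
      apply Finset.eq_of_subset_of_card_le
      · exact insert_subset hu.1 hsub
      · rw [card_insert_of_notMem hu.2, he, hc]
    · rintro ⟨u, hu, rfl⟩
      exact ⟨by rw [card_insert_of_notMem hu, he], subset_insert _ _⟩
  rw [himg, Finset.card_image_of_injOn, card_compl, he, Fintype.card_fin]
  intro u hu v hv huv
  simp only [coe_compl, Set.mem_compl_iff, mem_coe] at hu hv
  by_contra hne
  have huv' : insert u e = insert v e := huv
  have : u ∈ insert v e := huv' ▸ mem_insert_self u e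
  rcases mem_insert.mp this with h | h
  · exact hne h
  · exact hu h

lemma aux_double_count {β γ : Type*} (A : Finset β) (B : Finset γ) (P : β → γ → Prop)
    [∀ a b, Decidable (P a b)] :
    ∑ a ∈ A, #(B.filter (fun b => P a b)) = ∑ b ∈ B, #(A.filter (fun a => P a b)) := by
  simp only [card_filter]
  exact sum_comm

lemma aux_sub_one_le_choose_two (d : ℕ) : d - 1 ≤ d.choose 2 := by
  cases d with
  | zero => simp
  | succ m => simp [Nat.choose_succ_succ, Nat.choose_one_right]

lemma aux_choose_two_le (d : ℕ) (h : d.choose 2 ≤ d - 1) : d ≤ 2 := by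
  cases d with
  | zero => omega
  | succ m =>
    have h2 : m + m.choose 2 ≤ m := by
      have : (m+1).choose 2 = m + m.choose 2 := by
        rw [Nat.choose_succ_succ, Nat.choose_one_right]
      omega
    have h3 : m.choose 2 = 0 := by omega
    have := Nat.choose_eq_zero_iff.mp h3
    omega

lemma aux_sub_one_eq_choose_two {d : ℕ} (h : d ≤ 2) : d - 1 = d.choose 2 := by
  interval_cases d <;> rfl

lemma aux_sum_range_sub_add_choose (m r : ℕ) (h : r ≤ m) :
    (∑ i ∈ Finset.range r, (m - i)) + r.choose 2 = r * m := by
  induction r with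
  | zero => simp
  | succ s ih =>
    have h1 : s ≤ m := by omega
    have ih' := ih h1
    have hch : (s+1).choose 2 = s + s.choose 2 := by
      rw [Nat.choose_succ_succ, Nat.choose_one_right]
    rw [Finset.sum_range_succ, hch]
    have : (s+1) * m = s * m + m := by ring
    omega

lemma aux_powersetCard_filter {n : ℕ} (F : Finset (Finset (Fin n))) (S : Finset (Fin n)) :
    powersetCard 2 (F.filter (fun e => e ⊆ S))
      = (powersetCard 2 F).filter (fun p => ∀ e ∈ p, e ⊆ S) := by
  ext p
  simp only [mem_powersetCard, mem_filter]
  constructor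
  · rintro ⟨hsub, hc⟩
    exact ⟨⟨fun x hx => (mem_filter.mp (hsub hx)).1, hc⟩, fun e he => (mem_filter.mp (hsub he)).2⟩
  · rintro ⟨⟨hsub, hc⟩, hall⟩
    exact ⟨fun x hx => mem_filter.mpr ⟨hsub hx, hall _ hx⟩, hc⟩

theorem stmt6 (n k r : ℕ) (hk : 1 ≤ k) (hn : k + r ≤ n)
    (F : Finset (Finset (Fin n))) (hF : F ⊆ completeEdges n k) (hr : F.card = r) :
    ((simplices n k (completeEdges n k)).filter (fun S => ∃ e ∈ F, e ⊆ S)).card =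
        ∑ i ∈ Finset.range r, (n - k - i) ↔
      ∃ W : Finset (Fin n), W.card = k - 1 ∧ ∀ e ∈ F, W ⊆ e := by
  classical
  have hcardF : ∀ e ∈ F, e.card = k := fun e he => (mem_filter.mp (hF he)).2
  rw [aux_simplices_complete, filter_filter]
  set D := univ.filter (fun S : Finset (Fin n) => S.card = k + 1 ∧ ∃ e ∈ F, e ⊆ S) with hDdef
  set d := fun S : Finset (Fin n) => #(F.filter (fun e => e ⊆ S)) with hddef
  have hmemD : ∀ S, S ∈ D ↔ S.card = k + 1 ∧ ∃ e ∈ F, e ⊆ S := by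
    intro S; simp [hDdef]
  -- Lemma A : total degree sum
  have hA : ∑ S ∈ D, d S = r * (n - k) := by
    rw [hddef]
    rw [aux_double_count D F (fun S e => e ⊆ S)]
    rw [← hr]
    rw [Finset.sum_congr rfl (fun e he => ?_), Finset.sum_const, smul_eq_mul]
    have : D.filter (fun S => e ⊆ S)
        = univ.filter (fun S : Finset (Fin n) => S.card = k + 1 ∧ e ⊆ S) := by
      ext S
      simp only [mem_filter, hmemD, mem_univ, true_and]
      constructor
      · rintro ⟨⟨hc, _⟩, hs⟩; exact ⟨hc, hs⟩
      · rintro ⟨hc, hs⟩; exact ⟨⟨hc, e, he, hs⟩, hs⟩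
    rw [this, aux_card_supersets e (hcardF e he)]
  have hdpos : ∀ S ∈ D, 1 ≤ d S := by
    intro S hS
    obtain ⟨_, e, heF, heS⟩ := (hmemD S).mp hS
    rw [hddef]
    exact Finset.card_pos.mpr ⟨e, mem_filter.mpr ⟨heF, heS⟩⟩
  -- Lemma B
  have hB : #D + ∑ S ∈ D, (d S - 1) = r * (n - k) := by
    rw [← hA, Finset.card_eq_sum_ones, ← Finset.sum_add_distrib]
    exact Finset.sum_congr rfl (fun S hS => by have := hdpos S hS; omega)
  -- pair counting
  have hD2 : ∑ S ∈ D, (d S).choose 2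
      = ∑ p ∈ powersetCard 2 F, #(D.filter (fun S => ∀ e ∈ p, e ⊆ S)) := by
    rw [← aux_double_count D (powersetCard 2 F) (fun S p => ∀ e ∈ p, e ⊆ S)]
    refine Finset.sum_congr rfl (fun S _ => ?_)
    rw [hddef]
    rw [← Finset.card_powersetCard 2 (F.filter (fun e => e ⊆ S)), aux_powersetCard_filter]
  -- each pair of distinct edges lies in at most one simplex
  have hg : ∀ p ∈ powersetCard 2 F, #(D.filter (fun S => ∀ e ∈ p, e ⊆ S)) ≤ 1 := by
    intro p hp
    obtain ⟨hpF, hpc⟩ := mem_powersetCard.mp hp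
    obtain ⟨e, f, hef, rfl⟩ := Finset.card_eq_two.mp hpc
    have heF : e ∈ F := hpF (mem_insert_self _ _)
    have hfF : f ∈ F := hpF (mem_insert_of_mem (mem_singleton_self _))
    have huc : k + 1 ≤ #(e ∪ f) := by
      rcases Nat.lt_or_ge (#(e ∪ f)) (k + 1) with h | h
      · exfalso
        have h1 : e ∪ f = e := by
          refine (Finset.eq_of_subset_of_card_le subset_union_left ?_).symm
          rw [hcardF e heF]; omega
        have : f ⊆ e := by rw [← h1]; exact subset_union_right
        exact hef (Finset.eq_of_subset_of_card_le this (by rw [hcardF e heF, hcardF f hfF])).symm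
      · exact h
    rw [Finset.card_le_one]
    intro S1 hS1 S2 hS2
    rw [mem_filter] at hS1 hS2
    have hsub1 : e ∪ f ⊆ S1 := union_subset (hS1.2 e (mem_insert_self _ _))
      (hS1.2 f (mem_insert_of_mem (mem_singleton_self _)))
    have hsub2 : e ∪ f ⊆ S2 := union_subset (hS2.2 e (mem_insert_self _ _))
      (hS2.2 f (mem_insert_of_mem (mem_singleton_self _)))
    have hc1 := ((hmemD S1).mp hS1.1).1
    have hc2 := ((hmemD S2).mp hS2.1).1
    have e1 : e ∪ f = S1 := Finset.eq_of_subset_of_card_le hsub1 (by omega)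
    have e2 : e ∪ f = S2 := Finset.eq_of_subset_of_card_le hsub2 (by omega)
    rw [← e1, ← e2]
  have hcard2 : #(powersetCard 2 F) = r.choose 2 := by
    rw [Finset.card_powersetCard, hr]
  have hrm : r ≤ n - k := by omega
  have hC := aux_sum_range_sub_add_choose (n - k) r hrm
  -- main equivalence of counts
  have hkey : #D = (∑ i ∈ Finset.range r, (n - k - i))
      ↔ ∑ S ∈ D, (d S - 1) = r.choose 2 := by omega
  rw [hkey]
  constructor
  · -- forward direction
    intro hX
    have hle1 : ∑ S ∈ D, (d S - 1) ≤ ∑ S ∈ D, (d S).choose 2 :=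
      Finset.sum_le_sum (fun S _ => aux_sub_one_le_choose_two (d S))
    have hle2 : ∑ p ∈ powersetCard 2 F, #(D.filter (fun S => ∀ e ∈ p, e ⊆ S)) ≤ r.choose 2 := by
      calc ∑ p ∈ powersetCard 2 F, #(D.filter (fun S => ∀ e ∈ p, e ⊆ S))
          ≤ ∑ _p ∈ powersetCard 2 F, 1 := Finset.sum_le_sum hg
        _ = r.choose 2 := by rw [Finset.sum_const, smul_eq_mul, mul_one, hcard2]
    have hXeq : ∑ S ∈ D, (d S - 1) = ∑ S ∈ D, (d S).choose 2 := by omega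
    have hgeq : ∑ p ∈ powersetCard 2 F, #(D.filter (fun S => ∀ e ∈ p, e ⊆ S))
        = ∑ _p ∈ powersetCard 2 F, 1 := by
      rw [Finset.sum_const, smul_eq_mul, mul_one, hcard2]; omega
    have hpt1 : ∀ S ∈ D, d S - 1 = (d S).choose 2 :=
      (Finset.sum_eq_sum_iff_of_le (fun S _ => aux_sub_one_le_choose_two (d S))).mp hXeq
    have hd2 : ∀ S ∈ D, d S ≤ 2 := fun S hS =>
      aux_choose_two_le (d S) (le_of_eq (hpt1 S hS).symm)
    have hpt2 : ∀ p ∈ powersetCard 2 F, #(D.filter (fun S => ∀ e ∈ p, e ⊆ S)) = 1 :=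
      (Finset.sum_eq_sum_iff_of_le hg).mp hgeq
    -- pairwise intersections have size k - 1
    have hinter : ∀ e ∈ F, ∀ f ∈ F, e ≠ f → #(e ∩ f) = k - 1 := by
      intro e heF f hfF hef
      have hpmem : ({e, f} : Finset (Finset (Fin n))) ∈ powersetCard 2 F := by
        rw [mem_powersetCard]
        exact ⟨insert_subset heF (singleton_subset_iff.mpr hfF),
          Finset.card_eq_two.mpr ⟨e, f, hef, rfl⟩⟩
      have h1 := hpt2 _ hpmem
      have : (D.filter (fun S => ∀ x ∈ ({e, f} : Finset (Finset (Fin n))), x ⊆ S)).Nonempty := by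
        rw [← Finset.card_pos, h1]; omega
      obtain ⟨S, hS⟩ := this
      rw [mem_filter] at hS
      have hSc := ((hmemD S).mp hS.1).1
      have heS : e ⊆ S := hS.2 e (mem_insert_self _ _)
      have hfS : f ⊆ S := hS.2 f (mem_insert_of_mem (mem_singleton_self _))
      have hun : #(e ∪ f) ≤ k + 1 := by
        calc #(e ∪ f) ≤ #S := Finset.card_le_card (union_subset heS hfS)
          _ = k + 1 := hSc
      have hsum := Finset.card_union_add_card_inter e f
      rw [hcardF e heF, hcardF f hfF] at hsum
      have hlt : #(e ∩ f) < k := by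
        rcases Nat.lt_or_ge (#(e ∩ f)) k with h | h
        · exact h
        · exfalso
          have : e ∩ f = e := Finset.eq_of_subset_of_card_le inter_subset_left
            (by rw [hcardF e heF]; omega)
          have : e ⊆ f := by rw [← this]; exact inter_subset_right
          exact hef (Finset.eq_of_subset_of_card_le this
            (by rw [hcardF e heF, hcardF f hfF]))
      omega
    -- now build the common (k-1)-set
    rcases Nat.lt_or_ge (#F) 2 with hFsmall | hFbig
    · rcases Finset.eq_empty_or_nonempty F with rfl | ⟨e0, he0⟩
      · obtain ⟨W, _, hWc⟩ := Finset.exists_subset_card_eq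
          (show k - 1 ≤ #(univ : Finset (Fin n)) by simp; omega)
        exact ⟨W, hWc, fun e he => absurd he (by simp)⟩
      · obtain ⟨W, hWsub, hWc⟩ := Finset.exists_subset_card_eq
          (show k - 1 ≤ #e0 by rw [hcardF e0 he0]; omega)
        refine ⟨W, hWc, fun e he => ?_⟩
        have : e = e0 := Finset.card_le_one.mp (by omega) e he e0 he0
        rw [this]; exact hWsub
    · obtain ⟨e1, he1, e2, he2, h12⟩ := Finset.one_lt_card.mp hFbig
      refine ⟨e1 ∩ e2, hinter e1 he1 e2 he2 h12, fun f hf => ?_⟩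
      by_contra hnW
      obtain ⟨w, hwW, hwf⟩ := Finset.not_subset.mp hnW
      have hwe1 : w ∈ e1 := (mem_inter.mp hwW).1
      have hwe2 : w ∈ e2 := (mem_inter.mp hwW).2
      have hfe1 : f ≠ e1 := fun h => hwf (h ▸ hwe1)
      have hfe2 : f ≠ e2 := fun h => hwf (h ▸ hwe2)
      have hfi1 : f ∩ e1 = e1.erase w := by
        apply Finset.eq_of_subset_of_card_le
        · intro x hx
          rw [mem_erase]
          exact ⟨fun h => hwf (h ▸ (mem_inter.mp hx).1), (mem_inter.mp hx).2⟩
        · rw [Finset.card_erase_of_mem hwe1, hcardF e1 he1, hinter f hf e1 he1 hfe1]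
      have hfi2 : f ∩ e2 = e2.erase w := by
        apply Finset.eq_of_subset_of_card_le
        · intro x hx
          rw [mem_erase]
          exact ⟨fun h => hwf (h ▸ (mem_inter.mp hx).1), (mem_inter.mp hx).2⟩
        · rw [Finset.card_erase_of_mem hwe2, hcardF e2 he2, hinter f hf e2 he2 hfe2]
      have hunc : #(e1 ∪ e2) = k + 1 := by
        have := Finset.card_union_add_card_inter e1 e2
        rw [hcardF e1 he1, hcardF e2 he2, hinter e1 he1 e2 he2 h12] at this
        omega
      have hfsub : f ⊆ e1 ∪ e2 := by
        intro x hxf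
        by_contra hxu
        rw [mem_union] at hxu
        push_neg at hxu
        -- x ∈ f but x ∉ e1 ∪ e2 : then f has too many elements?
        -- f ⊇ (e1.erase w) from hfi1 : e1.erase w = f ∩ e1 ⊆ f
        have hsub1 : e1.erase w ⊆ f := by rw [← hfi1]; exact inter_subset_left
        have hsub2 : e2.erase w ⊆ f := by rw [← hfi2]; exact inter_subset_left
        have hbig : insert x ((e1 ∪ e2).erase w) ⊆ f := by
          intro y hy
          rcases mem_insert.mp hy with rfl | hy'
          · exact hxf
          · rcases mem_union.mp (Finset.erase_subset _ _ hy') with h | h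
            · exact hsub1 (mem_erase.mpr ⟨(mem_erase.mp hy').1, h⟩)
            · exact hsub2 (mem_erase.mpr ⟨(mem_erase.mp hy').1, h⟩)
        have hxnot : x ∉ (e1 ∪ e2).erase w := fun h =>
          (mem_union.mp (Finset.erase_subset _ _ h)).elim hxu.1 hxu.2
        have hcb : #(insert x ((e1 ∪ e2).erase w)) = k + 1 := by
          rw [Finset.card_insert_of_notMem hxnot,
            Finset.card_erase_of_mem (mem_union_left _ hwe1), hunc]
          omega
        have := Finset.card_le_card hbig
        rw [hcb, hcardF f hf] at this
        omega
      -- now e1, e2, f are three distinct edges inside S = e1 ∪ e2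
      have hSD : e1 ∪ e2 ∈ D := (hmemD _).mpr ⟨hunc, e1, he1, subset_union_left⟩
      have h3sub : ({e1, e2, f} : Finset (Finset (Fin n)))
          ⊆ F.filter (fun e => e ⊆ e1 ∪ e2) := by
        intro x hx
        simp only [mem_insert, mem_singleton] at hx
        rcases hx with rfl | rfl | rfl
        · exact mem_filter.mpr ⟨he1, subset_union_left⟩
        · exact mem_filter.mpr ⟨he2, subset_union_right⟩
        · exact mem_filter.mpr ⟨hf, hfsub⟩
      have h3card : #({e1, e2, f} : Finset (Finset (Fin n))) = 3 := by
        rw [Finset.card_insert_of_notMem, Finset.card_insert_of_notMem, Finset.card_singleton]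
        · simp [hfe2.symm]
        · simp only [mem_insert, mem_singleton]
          push_neg
          exact ⟨h12, hfe1.symm⟩
      have : 3 ≤ d (e1 ∪ e2) := by
        rw [hddef, ← h3card]
        exact Finset.card_le_card h3sub
      have := hd2 _ hSD
      omega
  · -- backward direction
    rintro ⟨W, hWc, hWsub⟩
    have hd2 : ∀ S ∈ D, d S ≤ 2 := by
      intro S hS
      obtain ⟨hSc, e0, he0F, he0S⟩ := (hmemD S).mp hS
      have hWS : W ⊆ S := (hWsub e0 he0F).trans he0S
      have hmap : ∀ e ∈ F.filter (fun e => e ⊆ S), e \ W ∈ powersetCard 1 (S \ W) := by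
        intro e he
        rw [mem_filter] at he
        rw [mem_powersetCard]
        refine ⟨sdiff_subset_sdiff he.2 Subset.rfl, ?_⟩
        rw [Finset.card_sdiff_of_subset (hWsub e he.1), hcardF e he.1, hWc]
        omega
      have hinj : Set.InjOn (fun e => e \ W) (F.filter (fun e => e ⊆ S)) := by
        intro e he f hf hef
        simp only [mem_coe, mem_filter] at he hf
        have he' : W ∪ (e \ W) = e := Finset.union_sdiff_of_subset (hWsub e he.1)
        have hf' : W ∪ (f \ W) = f := Finset.union_sdiff_of_subset (hWsub f hf.1)
        have hef' : e \ W = f \ W := hef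
        rw [← he', ← hf', hef']
      have hcS : #(S \ W) = 2 := by
        rw [Finset.card_sdiff_of_subset hWS, hSc, hWc]; omega
      calc d S ≤ #(powersetCard 1 (S \ W)) := Finset.card_le_card_of_injOn _ hmap hinj
        _ = 2 := by rw [Finset.card_powersetCard, hcS]; rfl
    have hg1 : ∀ p ∈ powersetCard 2 F, #(D.filter (fun S => ∀ e ∈ p, e ⊆ S)) = 1 := by
      intro p hp
      refine le_antisymm (hg p hp) ?_
      obtain ⟨hpF, hpc⟩ := mem_powersetCard.mp hp
      obtain ⟨e, f, hef, rfl⟩ := Finset.card_eq_two.mp hpc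
      have heF : e ∈ F := hpF (mem_insert_self _ _)
      have hfF : f ∈ F := hpF (mem_insert_of_mem (mem_singleton_self _))
      have hiW : W ⊆ e ∩ f := subset_inter (hWsub e heF) (hWsub f hfF)
      have hilt : #(e ∩ f) < k := by
        rcases Nat.lt_or_ge (#(e ∩ f)) k with h | h
        · exact h
        · exfalso
          have h1 : e ∩ f = e := Finset.eq_of_subset_of_card_le inter_subset_left
            (by rw [hcardF e heF]; omega)
          have h2 : e ⊆ f := by rw [← h1]; exact inter_subset_right
          exact hef (Finset.eq_of_subset_of_card_le h2
            (by rw [hcardF e heF, hcardF f hfF]))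
      have hige : k - 1 ≤ #(e ∩ f) := by
        calc k - 1 = #W := hWc.symm
          _ ≤ #(e ∩ f) := Finset.card_le_card hiW
      have hunc : #(e ∪ f) = k + 1 := by
        have := Finset.card_union_add_card_inter e f
        rw [hcardF e heF, hcardF f hfF] at this
        omega
      have hSD : e ∪ f ∈ D := (hmemD _).mpr ⟨hunc, e, heF, subset_union_left⟩
      have hmem : ∀ x ∈ ({e, f} : Finset (Finset (Fin n))), x ⊆ e ∪ f := by
        intro x hx
        rcases mem_insert.mp hx with rfl | hx'
        · exact subset_union_left
        · rw [mem_singleton.mp hx']; exact subset_union_right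
      exact Finset.card_pos.mpr ⟨e ∪ f, mem_filter.mpr ⟨hSD, hmem⟩⟩
    have : ∑ S ∈ D, (d S - 1) = ∑ S ∈ D, (d S).choose 2 :=
      Finset.sum_congr rfl (fun S hS => aux_sub_one_eq_choose_two (hd2 S hS))
    rw [this, hD2, Finset.sum_congr rfl hg1, Finset.sum_const, smul_eq_mul, mul_one, hcard2]
end

section
/- Let F be a set of r edges of K_n^k, with n ≥ k + r, such that all edges of F contain a common (k−1)-set W. Then the edges of F are exactly W ∪ {u_i} for r distinct vertices u_1,...,u_r outside W, and the number of simplices of K_n^k destroyed by deleting F is exactly (n−k) + (n−k−1) + ⋯ + (n−k−r+1). -/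
open Finset

lemma count_lemma (n k : ℕ) (hk : 1 ≤ k) (W : Finset (Fin n)) (hW : W.card = k - 1)
    (U : Finset (Fin n)) (hU : Disjoint U W) (hcard : k + U.card ≤ n) :
    (Finset.univ.filter (fun S : Finset (Fin n) =>
        S.card = k + 1 ∧ ∃ u ∈ U, insert u W ⊆ S)).card
      = ∑ i ∈ Finset.range U.card, (n - k - i) := by
  classical
  revert hU hcard
  induction U using Finset.induction_on with
  | empty => intro _ _; simp
  | @insert a U' ha ih =>
    intro hU hcard
    have haW : a ∉ W := by
      intro h
      exact (Finset.disjoint_left.mp hU (Finset.mem_insert_self a U')) h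
    have hU' : Disjoint U' W := Finset.disjoint_of_subset_left (Finset.subset_insert a U') hU
    have hcardins : (insert a U').card = U'.card + 1 := Finset.card_insert_of_notMem ha
    have hcard' : k + U'.card ≤ n := by omega
    have hcardaW : (insert a W).card = k := by
      rw [Finset.card_insert_of_notMem haW, hW]; omega
    -- split the filter
    have hsplit :
        (Finset.univ.filter (fun S : Finset (Fin n) =>
            S.card = k + 1 ∧ ∃ u ∈ insert a U', insert u W ⊆ S))
          = (Finset.univ.filter (fun S : Finset (Fin n) =>
              S.card = k + 1 ∧ ∃ u ∈ U', insert u W ⊆ S))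
            ∪ (Finset.univ.filter (fun S : Finset (Fin n) =>
              S.card = k + 1 ∧ insert a W ⊆ S ∧ ∀ u ∈ U', ¬ insert u W ⊆ S)) := by
      ext S
      simp only [Finset.mem_filter, Finset.mem_union, Finset.mem_univ, true_and,
        Finset.mem_insert]
      constructor
      · rintro ⟨hc, u, hu | hu, hsub⟩
        · by_cases h : ∃ u ∈ U', insert u W ⊆ S
          · exact Or.inl ⟨hc, h⟩
          · push_neg at h
            exact Or.inr ⟨hc, hu ▸ hsub, h⟩
        · exact Or.inl ⟨hc, u, hu, hsub⟩
      · rintro (⟨hc, u, hu, hsub⟩ | ⟨hc, hsub, _⟩)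
        · exact ⟨hc, u, Or.inr hu, hsub⟩
        · exact ⟨hc, a, Or.inl rfl, hsub⟩
    have hdisj : Disjoint
        (Finset.univ.filter (fun S : Finset (Fin n) =>
            S.card = k + 1 ∧ ∃ u ∈ U', insert u W ⊆ S))
        (Finset.univ.filter (fun S : Finset (Fin n) =>
            S.card = k + 1 ∧ insert a W ⊆ S ∧ ∀ u ∈ U', ¬ insert u W ⊆ S)) := by
      rw [Finset.disjoint_left]
      intro S hS hS'
      simp only [Finset.mem_filter, Finset.mem_univ, true_and] at hS hS'
      obtain ⟨_, u, hu, hsub⟩ := hS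
      exact hS'.2.2 u hu hsub
    -- the new part is the image of the complement of `insert a (W ∪ U')`
    have himg :
        (Finset.univ.filter (fun S : Finset (Fin n) =>
            S.card = k + 1 ∧ insert a W ⊆ S ∧ ∀ u ∈ U', ¬ insert u W ⊆ S))
          = (insert a (W ∪ U'))ᶜ.image (fun x => insert x (insert a W)) := by
      ext S
      simp only [Finset.mem_filter, Finset.mem_univ, true_and, Finset.mem_image,
        Finset.mem_compl, Finset.mem_insert, Finset.mem_union, not_or]
      constructor
      · rintro ⟨hc, hsub, hnot⟩
        have hcs : (S \ insert a W).card = 1 := by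
          rw [Finset.card_sdiff_of_subset hsub, hcardaW, hc]; omega
        obtain ⟨x, hx⟩ := Finset.card_eq_one.mp hcs
        have hxS : x ∈ S ∧ x ∉ insert a W := by
          have := hx ▸ Finset.mem_singleton_self x
          exact ⟨(Finset.mem_sdiff.mp this).1, (Finset.mem_sdiff.mp this).2⟩
        have hWS : W ⊆ S := (Finset.subset_insert a W).trans hsub
        have hxU' : x ∉ U' := by
          intro h
          exact hnot x h (Finset.insert_subset hxS.1 hWS)
        refine ⟨x, ⟨?_, ?_, hxU'⟩, ?_⟩
        · intro h; exact hxS.2 (h ▸ Finset.mem_insert_self a W)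
        · intro h; exact hxS.2 (Finset.mem_insert_of_mem h)
        · have : insert a W ∪ S \ insert a W = S := Finset.union_sdiff_of_subset hsub
          rw [hx] at this
          rw [← this]
          ext y
          simp only [Finset.mem_insert, Finset.mem_union, Finset.mem_singleton]
          tauto
      · rintro ⟨x, ⟨hxa, hxW, hxU'⟩, rfl⟩
        have hxaW : x ∉ insert a W := by
          simp only [Finset.mem_insert]; tauto
        refine ⟨?_, Finset.subset_insert _ _, ?_⟩
        · rw [Finset.card_insert_of_notMem hxaW, hcardaW]
        · intro u hu hsub
          have huW : u ∉ W := Finset.disjoint_left.mp hU' hu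
          have : u ∈ insert x (insert a W) := hsub (Finset.mem_insert_self u W)
          simp only [Finset.mem_insert] at this
          rcases this with rfl | rfl | h
          · exact hxU' hu
          · exact ha hu
          · exact huW h
    have hinj : Set.InjOn (fun x => insert x (insert a W))
        ((insert a (W ∪ U'))ᶜ : Finset (Fin n)) := by
      intro x hx y hy hxy
      simp only [Finset.coe_compl, Set.mem_compl_iff, Finset.mem_coe, Finset.mem_insert,
        Finset.mem_union, not_or] at hx hy
      have hxaW : x ∉ insert a W := by simp only [Finset.mem_insert]; tauto
      have hyaW : y ∉ insert a W := by simp only [Finset.mem_insert]; tauto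
      have hxy' : insert x (insert a W) = insert y (insert a W) := hxy
      have : x ∈ insert y (insert a W) := hxy' ▸ Finset.mem_insert_self x (insert a W)
      simp only [Finset.mem_insert] at this
      rcases this with h | h | h
      · exact h
      · exact absurd (Finset.mem_insert_self a W) (h ▸ hxaW)
      · exact absurd (Finset.mem_insert_of_mem h) hxaW
    have hcardC : ((insert a (W ∪ U'))ᶜ : Finset (Fin n)).card = n - k - U'.card := by
      have haWU : a ∉ W ∪ U' := by
        simp only [Finset.mem_union]
        push_neg
        exact ⟨haW, ha⟩
      have hdWU : Disjoint W U' := hU'.symm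
      rw [Finset.card_compl, Finset.card_insert_of_notMem haWU,
        Finset.card_union_of_disjoint hdWU, hW, Fintype.card_fin]
      omega
    rw [hsplit, Finset.card_union_of_disjoint hdisj, ih hU' hcard', himg,
      Finset.card_image_of_injOn hinj, hcardC, hcardins, Finset.sum_range_succ]

theorem stmt7 (n k r : ℕ) (hk : 1 ≤ k) (hn : k + r ≤ n)
    (F : Finset (Finset (Fin n))) (hF : F ⊆ completeEdges n k) (hr : F.card = r)
    (W : Finset (Fin n)) (hW : W.card = k - 1) (hWF : ∀ e ∈ F, W ⊆ e) :
    (∃ U : Finset (Fin n), U.card = r ∧ Disjoint U W ∧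
        F = U.image (fun u => insert u W)) ∧
    ((simplices n k (completeEdges n k)).filter (fun S => ∃ e ∈ F, e ⊆ S)).card =
      ∑ i ∈ Finset.range r, (n - k - i) := by
  classical
  have hsingle : ∀ e ∈ F, (e \ W).card = 1 := by
    intro e he
    have hec : e.card = k := (Finset.mem_filter.mp (hF he)).2
    rw [Finset.card_sdiff_of_subset (hWF e he), hec, hW]
    omega
  have key : ∀ e ∈ F, ∀ x ∈ e \ W, e = insert x W := by
    intro e he x hx
    obtain ⟨y, hy⟩ := Finset.card_eq_one.mp (hsingle e he)
    have hxy : x = y := by rw [hy] at hx; exact Finset.mem_singleton.mp hx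
    subst hxy
    have : W ∪ e \ W = e := Finset.union_sdiff_of_subset (hWF e he)
    rw [hy] at this
    rw [← this]
    ext z
    simp only [Finset.mem_insert, Finset.mem_union, Finset.mem_singleton]
    tauto
  set U : Finset (Fin n) := F.biUnion (fun e => e \ W) with hUdef
  have hpair : ∀ e₁ ∈ F, ∀ e₂ ∈ F, e₁ ≠ e₂ → Disjoint (e₁ \ W) (e₂ \ W) := by
    intro e₁ h₁ e₂ h₂ hne
    rw [Finset.disjoint_left]
    intro x hx₁ hx₂
    exact hne ((key e₁ h₁ x hx₁).trans (key e₂ h₂ x hx₂).symm)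
  have hUcard : U.card = r := by
    rw [hUdef, Finset.card_biUnion hpair]
    rw [Finset.sum_congr rfl hsingle]
    simp [hr]
  have hUW : Disjoint U W := by
    rw [Finset.disjoint_left]
    intro x hx
    obtain ⟨e, _, hxe⟩ := Finset.mem_biUnion.mp hx
    exact (Finset.mem_sdiff.mp hxe).2
  have hFU : F = U.image (fun u => insert u W) := by
    ext e
    simp only [Finset.mem_image]
    constructor
    · intro he
      obtain ⟨y, hy⟩ := Finset.card_eq_one.mp (hsingle e he)
      have hymem : y ∈ e \ W := hy ▸ Finset.mem_singleton_self y
      exact ⟨y, Finset.mem_biUnion.mpr ⟨e, he, hymem⟩, (key e he y hymem).symm⟩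
    · rintro ⟨u, hu, rfl⟩
      obtain ⟨e', he', hue'⟩ := Finset.mem_biUnion.mp hu
      rw [← key e' he' u hue']
      exact he'
  refine ⟨⟨U, hUcard, hUW, hFU⟩, ?_⟩
  have hset : (simplices n k (completeEdges n k)).filter (fun S => ∃ e ∈ F, e ⊆ S)
      = Finset.univ.filter (fun S : Finset (Fin n) =>
          S.card = k + 1 ∧ ∃ u ∈ U, insert u W ⊆ S) := by
    ext S
    simp only [simplices, completeEdges, Finset.mem_filter, Finset.mem_univ, true_and,
      Finset.mem_powersetCard]
    constructor
    · rintro ⟨⟨hc, _⟩, e, he, hsub⟩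
      rw [hFU] at he
      obtain ⟨u, hu, rfl⟩ := Finset.mem_image.mp he
      exact ⟨hc, u, hu, hsub⟩
    · rintro ⟨hc, u, hu, hsub⟩
      refine ⟨⟨hc, fun f hf => hf.2⟩, insert u W, ?_, hsub⟩
      rw [hFU]
      exact Finset.mem_image.mpr ⟨u, hu, rfl⟩
  rw [hset, ← hUcard]
  exact count_lemma n k hk W hW U hUW (by omega)
end

section
/- Let H be a k-uniform hypergraph on vertex set V₁ ∪ V₂ (disjoint, |V₁| = n₁ even) satisfying: (a) every edge has at most one vertex in V₁, and (b) every (k−1)-subset of V₂ has 0, n₁/2, or n₁ neighbors in V₁. Let G be the switched hypergraph (for each (k−1)-set U ⊆ V₂ with n₁/2 neighbors in V₁, replace those neighbors by the other n₁/2 vertices of V₁). Let P be the block-diagonal matrix with blocks (2/n₁)J − I (on V₁) and I (on V₂). Then for the adjacency tensors, A_G = P · A_H · Pᵀ, where (P·A·Pᵀ)_{i1...ik} = Σ_{j1,...,jk} a_{j1...jk} p_{i1 j1} ⋯ p_{ik jk}. -/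
/-- Adjacency tensor of a k-uniform hypergraph on `Fin n`. -/
noncomputable def adjTensor {n : ℕ} (k : ℕ) (H : Finset (Finset (Fin n))) :
    (Fin k → Fin n) → ℝ :=
  fun i => if Function.Injective i ∧ Finset.univ.image i ∈ H
    then 1 / (Nat.factorial (k - 1) : ℝ) else 0

/-- The triple product P·A·Pᵀ of an order-k tensor with an n×n matrix. -/
noncomputable def tensorConj {n k : ℕ} (P : Matrix (Fin n) (Fin n) ℝ)
    (A : (Fin k → Fin n) → ℝ) : (Fin k → Fin n) → ℝ :=
  fun i => ∑ j : Fin k → Fin n, A j * ∏ t : Fin k, P (i t) (j t)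

/-- Block diagonal matrix with block `(2/n₁)J − I` on `V₁` and identity on the complement. -/
noncomputable def switchMatrix {n : ℕ} (V₁ : Finset (Fin n)) : Matrix (Fin n) (Fin n) ℝ :=
  fun i j =>
    if i ∈ V₁ ∧ j ∈ V₁ then 2 / (V₁.card : ℝ) - (if i = j then 1 else 0)
    else if i ∉ V₁ ∧ j ∉ V₁ ∧ i = j then 1 else 0

open Classical in
/-- The GM-type switched hypergraph. -/
noncomputable def switched {n : ℕ} (k : ℕ) (V₁ V₂ : Finset (Fin n))
    (H : Finset (Finset (Fin n))) : Finset (Finset (Fin n)) :=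
  H.filter (fun e => e ⊆ V₂) ∪
    Finset.univ.filter (fun e => ∃ u ∈ V₁, ∃ U : Finset (Fin n), U ⊆ V₂ ∧
      U.card = k - 1 ∧ e = insert u U ∧
      (if (V₁.filter (fun w => insert w U ∈ H)).card = V₁.card / 2
        then insert u U ∉ H else insert u U ∈ H))


open Finset

-- P off the V₁ block
lemma swP_not_left {n : ℕ} {V₁ : Finset (Fin n)} {a b : Fin n} (ha : a ∉ V₁) :
    switchMatrix V₁ a b = if a = b then 1 else 0 := by
  classical
  unfold switchMatrix
  by_cases h : a = b
  · subst h; simp [ha]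
  · simp [ha, h]

lemma swP_cross {n : ℕ} {V₁ : Finset (Fin n)} {a b : Fin n} (ha : a ∈ V₁) (hb : b ∉ V₁) :
    switchMatrix V₁ a b = 0 := by
  unfold switchMatrix
  simp [ha, hb]

lemma swP_block {n : ℕ} {V₁ : Finset (Fin n)} {a b : Fin n} (ha : a ∈ V₁) (hb : b ∈ V₁) :
    switchMatrix V₁ a b = 2 / (V₁.card : ℝ) - (if a = b then 1 else 0) := by
  unfold switchMatrix
  simp [ha, hb]

lemma inter_card_le_one_of_mem_switched {n k : ℕ} {V₁ V₂ : Finset (Fin n)}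
    (hdisj : Disjoint V₁ V₂) {H : Finset (Finset (Fin n))}
    {e : Finset (Fin n)} (he : e ∈ switched k V₁ V₂ H) : (e ∩ V₁).card ≤ 1 := by
  classical
  rw [switched, Finset.mem_union] at he
  rcases he with he | he
  · rw [Finset.mem_filter] at he
    have h0 : e ∩ V₁ = ∅ := by
      rw [Finset.eq_empty_iff_forall_notMem]
      intro x hx
      rw [Finset.mem_inter] at hx
      exact Finset.disjoint_left.mp hdisj hx.2 (he.2 hx.1)
    simp [h0]
  · rw [Finset.mem_filter] at he
    obtain ⟨-, u, hu, U, hUV, hcard, rfl, -⟩ := he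
    have hsub : insert u U ∩ V₁ ⊆ {u} := by
      intro x hx
      rw [Finset.mem_inter, Finset.mem_insert] at hx
      rcases hx.1 with rfl | hxU
      · simp
      · exact (Finset.disjoint_left.mp hdisj.symm (hUV hxU) hx.2).elim
    calc (insert u U ∩ V₁).card ≤ ({u} : Finset (Fin n)).card := Finset.card_le_card hsub
    _ = 1 := Finset.card_singleton u

lemma mem_switched_of_subset {n k : ℕ} {V₁ V₂ : Finset (Fin n)}
    (hdisj : Disjoint V₁ V₂) {H : Finset (Finset (Fin n))}
    {e : Finset (Fin n)} (he : e ⊆ V₂) : e ∈ switched k V₁ V₂ H ↔ e ∈ H := by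
  classical
  rw [switched, Finset.mem_union]
  constructor
  · rintro (h | h)
    · exact (Finset.mem_filter.mp h).1
    · rw [Finset.mem_filter] at h
      obtain ⟨-, u, hu, U, hUV, hcard, rfl, -⟩ := h
      have : u ∈ V₂ := he (Finset.mem_insert_self u U)
      exact absurd this (Finset.disjoint_left.mp hdisj hu)
  · intro h
    exact Or.inl (Finset.mem_filter.mpr ⟨h, he⟩)

lemma insert_mem_switched_iff {n k : ℕ} {V₁ V₂ : Finset (Fin n)}
    (hdisj : Disjoint V₁ V₂) {H : Finset (Finset (Fin n))}
    {u : Fin n} {U : Finset (Fin n)} (hu : u ∈ V₁) (hUV : U ⊆ V₂) (hcard : U.card = k - 1) :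
    insert u U ∈ switched k V₁ V₂ H ↔
      (if (V₁.filter (fun w => insert w U ∈ H)).card = V₁.card / 2
        then insert u U ∉ H else insert u U ∈ H) := by
  classical
  rw [switched, Finset.mem_union]
  constructor
  · rintro (h | h)
    · rw [Finset.mem_filter] at h
      have : u ∈ V₂ := h.2 (Finset.mem_insert_self u U)
      exact absurd this (Finset.disjoint_left.mp hdisj hu)
    · rw [Finset.mem_filter] at h
      obtain ⟨-, u', hu', U', hUV', hcard', heq, hcond⟩ := h
      have huu : u' = u := by
        have hmem : u' ∈ insert u U := by rw [heq]; exact Finset.mem_insert_self u' U'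
        rcases Finset.mem_insert.mp hmem with h' | h'
        · exact h'
        · exact absurd hu' (Finset.disjoint_left.mp hdisj.symm (hUV h'))
      subst huu
      -- show U' = U
      have hU'U : U' = U := by
        have h1 : insert u' U' ∩ V₂ = U' := by
          ext x
          simp only [Finset.mem_inter, Finset.mem_insert]
          constructor
          · rintro ⟨rfl | hx, hx2⟩
            · exact absurd hx2 (Finset.disjoint_left.mp hdisj hu')
            · exact hx
          · intro hx; exact ⟨Or.inr hx, hUV' hx⟩
        have h2 : insert u' U ∩ V₂ = U := by
          ext x
          simp only [Finset.mem_inter, Finset.mem_insert]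
          constructor
          · rintro ⟨rfl | hx, hx2⟩
            · exact absurd hx2 (Finset.disjoint_left.mp hdisj hu)
            · exact hx
          · intro hx; exact ⟨Or.inr hx, hUV hx⟩
        rw [← h1, ← heq, h2]
      rwa [hU'U] at hcond
  · intro h
    exact Or.inr (Finset.mem_filter.mpr ⟨Finset.mem_univ _, u, hu, U, hUV, hcard, rfl, h⟩)

lemma adjTensor_ne_zero {n k : ℕ} {H : Finset (Finset (Fin n))} {j : Fin k → Fin n}
    (h : adjTensor k H j ≠ 0) :
    Function.Injective j ∧ Finset.univ.image j ∈ H := by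
  by_contra hc
  simp only [adjTensor] at h
  rw [if_neg hc] at h
  exact h rfl

theorem stmt12 {n k : ℕ} (hk : 1 ≤ k) (V₁ V₂ : Finset (Fin n))
    (hdisj : Disjoint V₁ V₂) (hcover : V₁ ∪ V₂ = Finset.univ) (heven : Even V₁.card)
    (H : Finset (Finset (Fin n))) (huni : ∀ e ∈ H, e.card = k)
    (ha : ∀ e ∈ H, (e ∩ V₁).card ≤ 1)
    (hb : ∀ U ⊆ V₂, U.card = k - 1 →
      (V₁.filter (fun w => insert w U ∈ H)).card = 0 ∨
      (V₁.filter (fun w => insert w U ∈ H)).card = V₁.card / 2 ∨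
      (V₁.filter (fun w => insert w U ∈ H)).card = V₁.card) :
    adjTensor k (switched k V₁ V₂ H) = tensorConj (switchMatrix V₁) (adjTensor k H) := by
  classical
  funext i
  set c : ℝ := 1 / (Nat.factorial (k - 1) : ℝ) with hc
  have hV2 : ∀ x : Fin n, x ∉ V₁ → x ∈ V₂ := by
    intro x hx
    have hxu := Finset.mem_univ x
    rw [← hcover, Finset.mem_union] at hxu
    tauto
  -- two positions in V₁ kill the RHS
  have hzero2 : ∀ (t₁ t₂ : Fin k), t₁ ≠ t₂ → i t₁ ∈ V₁ → i t₂ ∈ V₁ →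
      tensorConj (switchMatrix V₁) (adjTensor k H) i = 0 := by
    intro t₁ t₂ hne h1 h2
    simp only [tensorConj]
    apply Finset.sum_eq_zero
    intro j _
    by_contra hterm
    obtain ⟨hA, hprod⟩ := mul_ne_zero_iff.mp hterm
    rw [Finset.prod_ne_zero_iff] at hprod
    obtain ⟨hjinj, hjH⟩ := adjTensor_ne_zero hA
    have hj1 : j t₁ ∈ V₁ := by
      by_contra h
      exact hprod t₁ (Finset.mem_univ _) (swP_cross h1 h)
    have hj2 : j t₂ ∈ V₁ := by
      by_contra h
      exact hprod t₂ (Finset.mem_univ _) (swP_cross h2 h)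
    have hlt : 1 < (Finset.univ.image j ∩ V₁).card := by
      rw [Finset.one_lt_card]
      exact ⟨j t₁, Finset.mem_inter.mpr ⟨Finset.mem_image_of_mem j (Finset.mem_univ _), hj1⟩,
        j t₂, Finset.mem_inter.mpr ⟨Finset.mem_image_of_mem j (Finset.mem_univ _), hj2⟩,
        fun h => hne (hjinj h)⟩
    have := ha _ hjH
    omega
  by_cases hinj : Function.Injective i
  · by_cases htwo : ∃ t₁ t₂ : Fin k, t₁ ≠ t₂ ∧ i t₁ ∈ V₁ ∧ i t₂ ∈ V₁
    · -- two coordinates in V₁ : both sides 0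
      obtain ⟨t₁, t₂, hne, h1, h2⟩ := htwo
      rw [hzero2 t₁ t₂ hne h1 h2]
      simp only [adjTensor]
      rw [if_neg]
      rintro ⟨-, hmem⟩
      have hle := inter_card_le_one_of_mem_switched hdisj hmem
      have hlt : 1 < (Finset.univ.image i ∩ V₁).card := by
        rw [Finset.one_lt_card]
        exact ⟨i t₁, Finset.mem_inter.mpr ⟨Finset.mem_image_of_mem i (Finset.mem_univ _), h1⟩,
          i t₂, Finset.mem_inter.mpr ⟨Finset.mem_image_of_mem i (Finset.mem_univ _), h2⟩,
          fun h => hne (hinj h)⟩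
      omega
    · by_cases hone : ∃ s : Fin k, i s ∈ V₁
      · -- exactly one coordinate in V₁: the switching case
        obtain ⟨s, hs⟩ := hone
        have honly : ∀ t, t ≠ s → i t ∉ V₁ := fun t hts ht => htwo ⟨t, s, hts, ht, hs⟩
        set u := i s with hu
        set U : Finset (Fin n) := (Finset.univ.erase s).image i with hUdef
        have hUV : U ⊆ V₂ := by
          intro x hx
          obtain ⟨t, ht, rfl⟩ := Finset.mem_image.mp hx
          exact hV2 _ (honly t (Finset.ne_of_mem_erase ht))
        have hUcard : U.card = k - 1 := by
          rw [hUdef, Finset.card_image_of_injective _ hinj,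
            Finset.card_erase_of_mem (Finset.mem_univ s), Finset.card_univ, Fintype.card_fin]
        have himage : Finset.univ.image i = insert u U := by
          conv_lhs => rw [← Finset.insert_erase (Finset.mem_univ s)]
          rw [Finset.image_insert]
        have hV1pos : 0 < V₁.card := Finset.card_pos.mpr ⟨u, hs⟩
        have hV1two : 2 ≤ V₁.card := by
          rcases heven with ⟨r, hr⟩; omega
        have hN0 : (V₁.card : ℝ) ≠ 0 := Nat.cast_ne_zero.mpr (by omega)
        have himU : ∀ w : Fin n, Finset.univ.image (Function.update i s w) = insert w U := by
          intro w
          conv_lhs => rw [← Finset.insert_erase (Finset.mem_univ s)]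
          rw [Finset.image_insert, Function.update_self]
          congr 1
          apply Finset.image_congr
          intro t ht
          exact Function.update_of_ne (Finset.ne_of_mem_erase ht) _ _
        have hinjup : ∀ w ∈ V₁, Function.Injective (Function.update i s w) := by
          intro w hw a b hab
          by_cases has : a = s
          · by_cases hbs : b = s
            · rw [has, hbs]
            · rw [has, Function.update_self, Function.update_of_ne hbs] at hab
              exact absurd hw (by rw [hab]; exact honly b hbs)
          · by_cases hbs : b = s
            · rw [hbs, Function.update_self, Function.update_of_ne has] at hab
              exact absurd hw (by rw [← hab]; exact honly a has)
            · rw [Function.update_of_ne has, Function.update_of_ne hbs] at hab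
              exact hinj hab
        -- RHS computation
        have hvan : ∀ j ∈ (Finset.univ : Finset (Fin k → Fin n)),
            j ∉ Finset.univ.image (Function.update i s) →
            adjTensor k H j * ∏ t, switchMatrix V₁ (i t) (j t) = 0 := by
          intro j _ hj
          have hex : ∃ t, t ≠ s ∧ j t ≠ i t := by
            by_contra h
            push_neg at h
            apply hj
            refine Finset.mem_image.mpr ⟨j s, Finset.mem_univ _, ?_⟩
            funext t
            rcases eq_or_ne t s with rfl | hts
            · rw [Function.update_self]
            · rw [Function.update_of_ne hts]; exact (h t hts).symm
          obtain ⟨t, hts, hjt⟩ := hex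
          have h0 : switchMatrix V₁ (i t) (j t) = 0 := by
            rw [swP_not_left (honly t hts), if_neg (fun h => hjt h.symm)]
          rw [Finset.prod_eq_zero (Finset.mem_univ t) h0, mul_zero]
        have hpt : ∀ w : Fin n,
            adjTensor k H (Function.update i s w) *
              ∏ t, switchMatrix V₁ (i t) (Function.update i s w t)
            = if w ∈ V₁.filter (fun w => insert w U ∈ H)
                then c * (2 / (V₁.card : ℝ) - (if w = u then 1 else 0)) else 0 := by
          intro w
          have hprod : ∏ t, switchMatrix V₁ (i t) (Function.update i s w t)
              = switchMatrix V₁ u w := by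
            rw [Fintype.prod_eq_single s]
            · rw [Function.update_self]
            · intro t hts
              rw [Function.update_of_ne hts, swP_not_left (honly t hts), if_pos rfl]
          rw [hprod]
          by_cases hw : w ∈ V₁
          · by_cases hH : insert w U ∈ H
            · rw [if_pos (Finset.mem_filter.mpr ⟨hw, hH⟩)]
              have hA : adjTensor k H (Function.update i s w) = c := by
                simp only [adjTensor]
                rw [if_pos ⟨hinjup w hw, by rw [himU w]; exact hH⟩]
              have hcomm : (if u = w then (1:ℝ) else 0) = (if w = u then 1 else 0) := by
                by_cases h : u = w
                · rw [if_pos h, if_pos h.symm]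
                · rw [if_neg h, if_neg (fun h' => h h'.symm)]
              rw [hA, swP_block hs hw, hcomm]
            · rw [if_neg (show ¬ (w ∈ V₁.filter (fun w => insert w U ∈ H)) from
                  fun hmem' => hH (Finset.mem_filter.mp hmem').2)]
              have hA : adjTensor k H (Function.update i s w) = 0 := by
                simp only [adjTensor]
                rw [if_neg]
                rintro ⟨-, hm⟩
                rw [himU w] at hm
                exact hH hm
              rw [hA, zero_mul]
          · rw [if_neg (show ¬ (w ∈ V₁.filter (fun w => insert w U ∈ H)) from
                fun hmem' => hw (Finset.mem_filter.mp hmem').1), swP_cross hs hw, mul_zero]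
        have hRHS : tensorConj (switchMatrix V₁) (adjTensor k H) i
            = ∑ w ∈ V₁.filter (fun w => insert w U ∈ H),
                c * (2 / (V₁.card : ℝ) - (if w = u then 1 else 0)) := by
          simp only [tensorConj]
          calc ∑ j : Fin k → Fin n, adjTensor k H j * ∏ t, switchMatrix V₁ (i t) (j t)
              = ∑ j ∈ Finset.univ.image (Function.update i s),
                  adjTensor k H j * ∏ t, switchMatrix V₁ (i t) (j t) :=
                (Finset.sum_subset (Finset.subset_univ _) hvan).symm
            _ = ∑ w : Fin n, adjTensor k H (Function.update i s w) *
                  ∏ t, switchMatrix V₁ (i t) (Function.update i s w t) :=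
                Finset.sum_image (fun x _ y _ h => Function.update_injective i s h)
            _ = ∑ w : Fin n, if w ∈ V₁.filter (fun w => insert w U ∈ H)
                  then c * (2 / (V₁.card : ℝ) - (if w = u then 1 else 0)) else 0 :=
                Finset.sum_congr rfl (fun w _ => hpt w)
            _ = ∑ w ∈ V₁.filter (fun w => insert w U ∈ H),
                  c * (2 / (V₁.card : ℝ) - (if w = u then 1 else 0)) := by
                rw [Finset.sum_ite_mem, Finset.univ_inter]
        have hsumval : (∑ w ∈ V₁.filter (fun w => insert w U ∈ H),
              c * (2 / (V₁.card : ℝ) - (if w = u then 1 else 0)))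
            = c * (((V₁.filter (fun w => insert w U ∈ H)).card : ℝ) * (2 / (V₁.card : ℝ))
                - (if insert u U ∈ H then 1 else 0)) := by
          rw [← Finset.mul_sum]
          congr 1
          rw [Finset.sum_sub_distrib, Finset.sum_const, nsmul_eq_mul,
            Finset.sum_ite_eq' _ u (fun _ => (1:ℝ))]
          congr 1
          by_cases h : insert u U ∈ H
          · simp [Finset.mem_filter, hs, h]
          · simp [Finset.mem_filter, h]
        have hLHS : adjTensor k (switched k V₁ V₂ H) i
            = if (if (V₁.filter (fun w => insert w U ∈ H)).card = V₁.card / 2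
                then insert u U ∉ H else insert u U ∈ H) then c else 0 := by
          have hMem := insert_mem_switched_iff (k := k) (H := H) hdisj hs hUV hUcard
          simp only [adjTensor]
          rw [himage]
          by_cases hG : insert u U ∈ switched k V₁ V₂ H
          · rw [if_pos ⟨hinj, hG⟩, if_pos (hMem.mp hG)]
          · rw [if_neg (fun h => hG h.2), if_neg (fun h => hG (hMem.mpr h))]
        rw [hLHS, hRHS, hsumval]
        have huT : insert u U ∈ H → 1 ≤ (V₁.filter (fun w => insert w U ∈ H)).card :=
          fun h => Finset.card_pos.mpr ⟨u, Finset.mem_filter.mpr ⟨hs, h⟩⟩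
        have hNd : ((V₁.card / 2 : ℕ) : ℝ) * (2 / (V₁.card : ℝ)) = 1 := by
          have h2 : (V₁.card / 2) * 2 = V₁.card := Nat.div_mul_cancel heven.two_dvd
          field_simp
          exact_mod_cast h2
        rcases hb U hUV hUcard with h0 | hhalf | hall
        · have heH : insert u U ∉ H := fun h => by have := huT h; omega
          rw [h0]
          have hne : ¬((0:ℕ) = V₁.card / 2) := by omega
          simp [hne, heH]
        · rw [hhalf, hNd]
          by_cases heH : insert u U ∈ H
          · simp [heH]
          · simp [heH]
        · have hTV : V₁.filter (fun w => insert w U ∈ H) = V₁ :=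
            Finset.eq_of_subset_of_card_le (Finset.filter_subset _ _) (le_of_eq hall.symm)
          have heH : insert u U ∈ H := by
            have hmem : u ∈ V₁.filter (fun w => insert w U ∈ H) := by rw [hTV]; exact hs
            exact (Finset.mem_filter.mp hmem).2
          rw [hall]
          have hne : ¬(V₁.card = V₁.card / 2) := by omega
          simp only [hne, if_false, heH, if_true]
          have h2 : ((V₁.card : ℕ) : ℝ) * (2 / (V₁.card : ℝ)) = 2 := by
            field_simp
          rw [h2]
          norm_num
      · -- all coordinates outside V₁
        push_neg at hone
        have hR : tensorConj (switchMatrix V₁) (adjTensor k H) i = adjTensor k H i := by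
          simp only [tensorConj]
          rw [Finset.sum_eq_single i]
          · have hone1 : ∀ t : Fin k, switchMatrix V₁ (i t) (i t) = 1 := by
              intro t
              rw [swP_not_left (hone t), if_pos rfl]
            rw [Finset.prod_congr rfl (fun t _ => hone1 t), Finset.prod_const_one, mul_one]
          · intro j _ hji
            obtain ⟨t, ht⟩ : ∃ t, j t ≠ i t := by
              by_contra h
              push_neg at h
              exact hji (funext h)
            have h0 : switchMatrix V₁ (i t) (j t) = 0 := by
              rw [swP_not_left (hone t), if_neg (fun h => ht h.symm)]
            rw [Finset.prod_eq_zero (Finset.mem_univ t) h0, mul_zero]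
          · intro h
            exact absurd (Finset.mem_univ i) h
        rw [hR]
        simp only [adjTensor]
        have hiff : Finset.univ.image i ∈ switched k V₁ V₂ H ↔ Finset.univ.image i ∈ H :=
          mem_switched_of_subset hdisj (by
            intro x hx
            obtain ⟨t, -, rfl⟩ := Finset.mem_image.mp hx
            exact hV2 _ (hone t))
        by_cases hmem : Finset.univ.image i ∈ H
        · rw [if_pos ⟨hinj, hiff.mpr hmem⟩, if_pos ⟨hinj, hmem⟩]
        · rw [if_neg (fun h => hmem (hiff.mp h.2)), if_neg (fun h => hmem h.2)]
  · -- i not injective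
    have hL : adjTensor k (switched k V₁ V₂ H) i = 0 := by
      simp only [adjTensor]
      rw [if_neg (fun h => hinj h.1)]
    rw [hL]
    obtain ⟨t₁, t₂, heq, hne⟩ := Function.not_injective_iff.mp hinj
    by_cases h1 : i t₁ ∈ V₁
    · exact (hzero2 t₁ t₂ hne h1 (heq ▸ h1)).symm
    · symm
      simp only [tensorConj]
      apply Finset.sum_eq_zero
      intro j _
      by_contra hterm
      obtain ⟨hA, hprod⟩ := mul_ne_zero_iff.mp hterm
      rw [Finset.prod_ne_zero_iff] at hprod
      obtain ⟨hjinj, -⟩ := adjTensor_ne_zero hA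
      have hj1 : j t₁ = i t₁ := by
        by_contra h
        exact hprod t₁ (Finset.mem_univ _)
          (by rw [swP_not_left h1, if_neg (fun h' => h h'.symm)])
      have hj2 : j t₂ = i t₂ := by
        by_contra h
        exact hprod t₂ (Finset.mem_univ _)
          (by rw [swP_not_left (heq ▸ h1), if_neg (fun h' => h h'.symm)])
      exact hne (hjinj (by rw [hj1, hj2, heq]))
end

section
/- Let H be a k-uniform hypergraph on vertex set V₁ ∪ V₂ (|V₁| = n₁ even) satisfying conditions (a) and (b) of GM-type switching, and fix a (k−1)-set {i₂,...,i_k} ⊆ V₂ with exactly n₁/2 neighbors in V₁. Let P be block diagonal with block (2/n₁)J − I on V₁ and identity on V₂. Then for i₁ ∈ V₁: (P·A_H·Pᵀ)_{i1 i2...ik} = 1/(k−1)! if i₁ is not a neighbor of {i₂,...,i_k} in H, and equals 0 if i₁ is a neighbor of {i₂,...,i_k} in H. -/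
theorem stmt14 {n k : ℕ} (hk : 1 ≤ k) (V₁ V₂ : Finset (Fin n))
    (hdisj : Disjoint V₁ V₂) (hcover : V₁ ∪ V₂ = Finset.univ) (heven : Even V₁.card)
    (H : Finset (Finset (Fin n))) (huni : ∀ e ∈ H, e.card = k)
    (ha : ∀ e ∈ H, (e ∩ V₁).card ≤ 1)
    (hb : ∀ U ⊆ V₂, U.card = k - 1 →
      (V₁.filter (fun w => insert w U ∈ H)).card = 0 ∨
      (V₁.filter (fun w => insert w U ∈ H)).card = V₁.card / 2 ∨
      (V₁.filter (fun w => insert w U ∈ H)).card = V₁.card)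
    (U : Finset (Fin n)) (hU : U ⊆ V₂) (hUcard : U.card = k - 1)
    (hhalf : (V₁.filter (fun w => insert w U ∈ H)).card = V₁.card / 2)
    (i : Fin k → Fin n) (hinj : Function.Injective i) (hi0 : i ⟨0, hk⟩ ∈ V₁)
    (himg : Finset.univ.image i = insert (i ⟨0, hk⟩) U) :
    tensorConj (switchMatrix V₁) (adjTensor k H) i =
      if insert (i ⟨0, hk⟩) U ∈ H then 0 else 1 / (Nat.factorial (k - 1) : ℝ) := by
  classical
  set z : Fin k := ⟨0, hk⟩ with hzdef
  set c : ℝ := 1 / (Nat.factorial (k - 1) : ℝ) with hcdef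
  have hUV₁ : ∀ x ∈ U, x ∉ V₁ := fun x hx h => (Finset.disjoint_left.mp hdisj h) (hU hx)
  have hi0U : i z ∉ U := fun h => hUV₁ _ h hi0
  have himg' : (Finset.univ.erase z).image i = U := by
    apply Finset.eq_of_subset_of_card_le
    · intro x hx
      obtain ⟨t, ht, rfl⟩ := Finset.mem_image.mp hx
      have hmem : i t ∈ insert (i z) U := by
        rw [← himg]; exact Finset.mem_image_of_mem i (Finset.mem_univ t)
      rcases Finset.mem_insert.mp hmem with h | h
      · exact absurd (hinj h) (Finset.mem_erase.mp ht).1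
      · exact h
    · rw [hUcard, Finset.card_image_of_injective _ hinj,
        Finset.card_erase_of_mem (Finset.mem_univ z), Finset.card_univ, Fintype.card_fin]
  have hitU : ∀ t : Fin k, t ≠ z → i t ∈ U := by
    intro t ht
    rw [← himg']
    exact Finset.mem_image_of_mem i (Finset.mem_erase.mpr ⟨ht, Finset.mem_univ t⟩)
  have hitV₁ : ∀ t : Fin k, t ≠ z → i t ∉ V₁ := fun t ht => hUV₁ _ (hitU t ht)
  have key : ∀ j : Fin k → Fin n,
      adjTensor k H j * ∏ t, switchMatrix V₁ (i t) (j t) ≠ 0 →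
      j = Function.update i z (j z) := by
    intro j hj
    funext t
    by_cases ht : t = z
    · subst ht; simp
    · rw [Function.update_of_ne ht]
      have hfac : switchMatrix V₁ (i t) (j t) ≠ 0 := by
        intro h0
        exact hj (by rw [Finset.prod_eq_zero (Finset.mem_univ t) h0, mul_zero])
      by_contra hne
      apply hfac
      have h1 : ¬ (i t ∈ V₁ ∧ j t ∈ V₁) := fun h => hitV₁ t ht h.1
      have h2 : ¬ (i t ∉ V₁ ∧ j t ∉ V₁ ∧ i t = j t) := fun h => hne h.2.2.symm
      simp only [switchMatrix, if_neg h1, if_neg h2]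
  have hsum : tensorConj (switchMatrix V₁) (adjTensor k H) i
      = ∑ w : Fin n, adjTensor k H (Function.update i z w) *
          ∏ t, switchMatrix V₁ (i t) (Function.update i z w t) := by
    have hinjmap : ∀ a ∈ (Finset.univ : Finset (Fin n)), ∀ b ∈ (Finset.univ : Finset (Fin n)),
        Function.update i z a = Function.update i z b → a = b := by
      intro a _ b _ hab
      have := congrFun hab z
      simpa using this
    have h1 : ∑ j ∈ Finset.univ.image (fun w : Fin n => Function.update i z w),
        adjTensor k H j * ∏ t, switchMatrix V₁ (i t) (j t)
        = ∑ w : Fin n, adjTensor k H (Function.update i z w) *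
            ∏ t, switchMatrix V₁ (i t) (Function.update i z w t) :=
      Finset.sum_image hinjmap
    have h2 : ∑ j : Fin k → Fin n, adjTensor k H j * ∏ t, switchMatrix V₁ (i t) (j t)
        = ∑ j ∈ Finset.univ.image (fun w : Fin n => Function.update i z w),
            adjTensor k H j * ∏ t, switchMatrix V₁ (i t) (j t) := by
      symm
      apply Finset.sum_subset (Finset.subset_univ _)
      intro j _ hj
      by_contra h0
      exact hj (by rw [key j h0]; exact Finset.mem_image_of_mem _ (Finset.mem_univ _))
    show (∑ j : Fin k → Fin n, adjTensor k H j * ∏ t, switchMatrix V₁ (i t) (j t)) = _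
    rw [h2, h1]
  have hprod : ∀ w : Fin n,
      (∏ t, switchMatrix V₁ (i t) (Function.update i z w t)) = switchMatrix V₁ (i z) w := by
    intro w
    rw [Finset.prod_eq_single z]
    · rw [Function.update_self]
    · intro t _ ht
      rw [Function.update_of_ne ht]
      simp [switchMatrix, hitV₁ t ht]
    · intro h; exact absurd (Finset.mem_univ z) h
  have himage : ∀ w : Fin n, Finset.univ.image (Function.update i z w) = insert w U := by
    intro w
    rw [show (Finset.univ : Finset (Fin k)) = insert z (Finset.univ.erase z) from
      (Finset.insert_erase (Finset.mem_univ z)).symm]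
    rw [Finset.image_insert, Function.update_self]
    congr 1
    rw [← himg']
    apply Finset.image_congr
    intro t ht
    exact Function.update_of_ne (Finset.mem_erase.mp ht).1 _ _
  have hinjF : ∀ w ∈ V₁, Function.Injective (Function.update i z w) := by
    intro w hw s t hst
    by_cases hs : s = z <;> by_cases ht : t = z
    · rw [hs, ht]
    · exfalso
      rw [hs, Function.update_self, Function.update_of_ne ht] at hst
      have : w ∈ U := by rw [hst]; exact hitU t ht
      exact hUV₁ _ this hw
    · exfalso
      rw [ht, Function.update_self, Function.update_of_ne hs] at hst
      have : w ∈ U := by rw [← hst]; exact hitU s hs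
      exact hUV₁ _ this hw
    · rw [Function.update_of_ne hs, Function.update_of_ne ht] at hst
      exact hinj hst
  have hA : ∀ w ∈ V₁, adjTensor k H (Function.update i z w)
      = if insert w U ∈ H then c else 0 := by
    intro w hw
    simp only [adjTensor, himage w, ← hcdef]
    by_cases hE : insert w U ∈ H
    · rw [if_pos (show Function.Injective (Function.update i z w) ∧ insert w U ∈ H from
        ⟨hinjF w hw, hE⟩), if_pos hE]
    · rw [if_neg (show ¬ (Function.Injective (Function.update i z w) ∧ insert w U ∈ H) from
        fun h => hE h.2), if_neg hE]
  have hswz : ∀ w : Fin n, w ∉ V₁ → switchMatrix V₁ (i z) w = 0 := by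
    intro w hw
    have h1 : ¬ (i z ∈ V₁ ∧ w ∈ V₁) := fun h => hw h.2
    have h2 : ¬ (i z ∉ V₁ ∧ w ∉ V₁ ∧ i z = w) := fun h => h.1 hi0
    simp only [switchMatrix, if_neg h1, if_neg h2]
  rw [hsum]
  simp only [hprod]
  rw [show (∑ w : Fin n, adjTensor k H (Function.update i z w) * switchMatrix V₁ (i z) w)
      = ∑ w ∈ V₁, adjTensor k H (Function.update i z w) * switchMatrix V₁ (i z) w from
    (Finset.sum_subset (Finset.subset_univ V₁)
      (fun w _ hw => by rw [hswz w hw, mul_zero])).symm]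
  have hstep : ∀ w ∈ V₁, adjTensor k H (Function.update i z w) * switchMatrix V₁ (i z) w
      = (if insert w U ∈ H then c * (2 / (V₁.card : ℝ)) - c * (if i z = w then 1 else 0)
         else 0) := by
    intro w hw
    rw [hA w hw]
    simp only [switchMatrix, if_pos (show i z ∈ V₁ ∧ w ∈ V₁ from ⟨hi0, hw⟩)]
    by_cases hE : insert w U ∈ H
    · rw [if_pos hE, if_pos hE]; ring
    · rw [if_neg hE, if_neg hE, zero_mul]
  rw [Finset.sum_congr rfl hstep, Finset.sum_ite, Finset.sum_const_zero, add_zero]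
  rw [Finset.sum_sub_distrib, Finset.sum_const, ← Finset.mul_sum, Finset.sum_ite_eq]
  have hizmem : (i z ∈ V₁.filter (fun w => insert w U ∈ H)) ↔ insert (i z) U ∈ H := by
    simp [Finset.mem_filter, hi0]
  obtain ⟨m, hm⟩ := heven
  have hm0 : m ≠ 0 := by
    intro h
    have h0 : V₁.card = 0 := by omega
    rw [Finset.card_eq_zero.mp h0] at hi0
    exact absurd hi0 (Finset.notMem_empty _)
  have hN : ((V₁.filter (fun w => insert w U ∈ H)).card : ℝ) = m := by
    rw [hhalf]; norm_cast; omega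
  have hV : (V₁.card : ℝ) = 2 * m := by rw [hm]; push_cast; ring
  rw [if_congr hizmem rfl rfl, nsmul_eq_mul, hN, hV]
  have hmne : (m : ℝ) ≠ 0 := Nat.cast_ne_zero.mpr hm0
  have h1 : (m : ℝ) * (c * (2 / (2 * m))) = c := by field_simp
  rw [h1]
  by_cases hE : insert (i z) U ∈ H
  · rw [if_pos hE, if_pos hE, mul_one, sub_self]
  · rw [if_neg hE, if_neg hE, mul_zero, sub_zero]
end
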